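/- Let k ≥ 1 be an integer and let (ε_1,…,ε_n) be an admissible word such that the basic interval I(ε_1,…,ε_n) is full. Then the closure of the basic interval I(ε_1,…,ε_n, ε*_1,…,ε*_k, 0^{t_k+1}) is contained in the interior of I(ε_1,…,ε_n). -/

import Mathlib

open MeasureTheory Filter Set

noncomputable section

/-- The β-transformation on `(0,1]`: `T_β x = βx − ⌈βx⌉ + 1`. -/
def Tbeta (β x : ℝ) : ℝ := β * x - ⌈β * x⌉ + 1

/-- The digits of the β-expansion, 0-indexed: `eps β x n` is the `(n+1)`-st digit
`ε_{n+1}(x,β) = ⌈β T_β^n x⌉ − 1`. -/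
def eps (β x : ℝ) (n : ℕ) : ℤ := ⌈β * (Tbeta β)^[n] x⌉ - 1

/-- The basic interval of order `n` containing `x`:
all `y ∈ (0,1]` whose first `n` digits agree with those of `x`. -/
def In (β x : ℝ) (n : ℕ) : Set ℝ := {y ∈ Ioc (0:ℝ) 1 | ∀ j < n, eps β y j = eps β x j}

/-- The length of a set (Lebesgue measure). -/
def len (s : Set ℝ) : ℝ := (volume s).toReal

/-- `tseq β n = t_n`: the maximal length of the block of zero digits of the
β-expansion of `1` immediately following position `n` (digits `ε*_{n+1},…,ε*_{n+k}`). -/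
def tseq (β : ℝ) (n : ℕ) : ℕ := sSup {k : ℕ | ∀ j < k, eps β 1 (n + j) = 0}

/-- `Gam β n = Γ_n = max_{1 ≤ k ≤ n} t_k`. -/
def Gam (β : ℝ) (n : ℕ) : ℕ := Finset.sup (Finset.Icc 1 n) (tseq β)

/-- `lam β = λ(β) = limsup_n Γ_n / n`. -/
def lam (β : ℝ) : ℝ := Filter.limsup (fun n : ℕ => (Gam β n : ℝ) / n) atTop

/-- `kstar β x n = k_n^*(x)`: the smallest `k ≥ 0` such that
`(ε_{k+1}(x),…,ε_n(x)) = (ε*_1,…,ε*_{n−k})`. -/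
def kstar (β x : ℝ) (n : ℕ) : ℕ := sInf {k : ℕ | ∀ i < n - k, eps β x (k + i) = eps β 1 i}

/-- `tau β x = τ(x) = limsup_n t_{n − k_n^*(x)} / n`. -/
def tau (β x : ℝ) : ℝ :=
  Filter.limsup (fun n : ℕ => (tseq β (n - kstar β x n) : ℝ) / n) atTop

/-- The upper density `\overline{D}(x) = limsup_n (−log_β |I_n(x)|)/n`. -/
def upperD (β x : ℝ) : ℝ :=
  Filter.limsup (fun n : ℕ => -Real.logb β (len (In β x n)) / n) atTop

/-- The lower density `\underline{D}(x) = liminf_n (−log_β |I_n(x)|)/n`. -/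
def lowerD (β x : ℝ) : ℝ :=
  Filter.liminf (fun n : ℕ => -Real.logb β (len (In β x n)) / n) atTop

/-- The basic interval (cylinder) associated to a finite word `w` of digits:
all `x ∈ (0,1]` whose β-expansion starts with `w`. -/
def cyl (β : ℝ) (w : List ℤ) : Set ℝ :=
  {x ∈ Ioc (0:ℝ) 1 | ∀ j < w.length, eps β x j = w.getD j 0}

/-- A finite word is admissible if it occurs as the initial digits of some `x ∈ (0,1]`. -/
def Admissible (β : ℝ) (w : List ℤ) : Prop := (cyl β w).Nonempty

/-- A basic interval is full if its length is `β^{−n}` where `n` is the order. -/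
def IsFull (β : ℝ) (w : List ℤ) : Prop := len (cyl β w) = β ^ (-(w.length : ℤ))

/-- The word `(ε*_1,…,ε*_n)` of the first `n` digits of the β-expansion of `1`. -/
def estarWord (β : ℝ) (n : ℕ) : List ℤ := (List.range n).map (eps β 1)

/-- The interior of a set relative to the subspace `[0,1]`
(for `S ⊆ [0,1]` this is exactly the interior of `S` in the topology of `[0,1]`). -/
def intIn01 (S : Set ℝ) : Set ℝ := Icc 0 1 \ closure (Icc 0 1 \ S)

lemma Tbeta_mem (β x : ℝ) : Tbeta β x ∈ Ioc (0:ℝ) 1 := by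
  constructor
  · have := Int.ceil_lt_add_one (β * x); unfold Tbeta; linarith
  · have := Int.le_ceil (β * x); unfold Tbeta; linarith

lemma iterate_mem (β x : ℝ) (hx : x ∈ Ioc (0:ℝ) 1) (n : ℕ) :
    (Tbeta β)^[n] x ∈ Ioc (0:ℝ) 1 := by
  cases n with
  | zero => exact hx
  | succ n => rw [Function.iterate_succ_apply']; exact Tbeta_mem _ _

lemma expand (β : ℝ) (hβ : 0 < β) (x : ℝ) (n : ℕ) :
    x = (∑ j ∈ Finset.range n, (eps β x j : ℝ) * (β ^ (j+1))⁻¹)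
      + (β ^ n)⁻¹ * (Tbeta β)^[n] x := by
  induction n with
  | zero => simp
  | succ n ih =>
    rw [Finset.sum_range_succ]
    have hc : ((eps β x n : ℝ)) = (⌈β * (Tbeta β)^[n] x⌉ : ℝ) - 1 := by
      unfold eps; push_cast; ring
    have hTy : (Tbeta β)^[n+1] x = β * (Tbeta β)^[n] x - ⌈β * (Tbeta β)^[n] x⌉ + 1 := by
      rw [Function.iterate_succ_apply']; rfl
    have hb : β ^ n ≠ 0 := pow_ne_zero _ hβ.ne'
    have hb1 : β ^ (n+1) ≠ 0 := pow_ne_zero _ hβ.ne'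
    rw [hTy, hc]
    have h2 : (β ^ (n+1))⁻¹ * (β * (Tbeta β)^[n] x) = (β ^ n)⁻¹ * (Tbeta β)^[n] x := by
      rw [pow_succ]; field_simp
    linear_combination ih - h2

lemma eps_shift (β x : ℝ) (n j : ℕ) :
    eps β x (n + j) = eps β ((Tbeta β)^[n] x) j := by
  unfold eps
  rw [Nat.add_comm, Function.iterate_add_apply]

lemma eps_nonneg (β x : ℝ) (hx : x ∈ Ioc (0:ℝ) 1) (hβ : 0 < β) (n : ℕ) :
    0 ≤ eps β x n := by
  have h := iterate_mem β x hx n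
  have : (0:ℝ) < β * (Tbeta β)^[n] x := mul_pos hβ h.1
  have := Int.ceil_pos.mpr this
  unfold eps; omega

lemma squeeze (β : ℝ) (hβ : 0 < β) {x y z : ℝ} (hxy : x ≤ y) (hyz : y ≤ z) (n : ℕ)
    (h : ∀ i < n, eps β x i = eps β z i) :
    (∀ i < n, eps β y i = eps β x i) ∧
      ((Tbeta β)^[n] x ≤ (Tbeta β)^[n] y ∧ (Tbeta β)^[n] y ≤ (Tbeta β)^[n] z) := by
  induction n with
  | zero => exact ⟨fun i hi => absurd hi (Nat.not_lt_zero i), hxy, hyz⟩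
  | succ n ih =>
    obtain ⟨hd, h1, h2⟩ := ih (fun i hi => h i (Nat.lt_succ_of_lt hi))
    have hcx : ⌈β * (Tbeta β)^[n] x⌉ = ⌈β * (Tbeta β)^[n] z⌉ := by
      have := h n (Nat.lt_succ_self n); unfold eps at this; omega
    have hle1 : ⌈β * (Tbeta β)^[n] x⌉ ≤ ⌈β * (Tbeta β)^[n] y⌉ :=
      Int.ceil_le_ceil (mul_le_mul_of_nonneg_left h1 hβ.le)
    have hle2 : ⌈β * (Tbeta β)^[n] y⌉ ≤ ⌈β * (Tbeta β)^[n] z⌉ :=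
      Int.ceil_le_ceil (mul_le_mul_of_nonneg_left h2 hβ.le)
    have hcy : ⌈β * (Tbeta β)^[n] y⌉ = ⌈β * (Tbeta β)^[n] x⌉ := by omega
    have hiter : ∀ u : ℝ, (Tbeta β)^[n+1] u = β * (Tbeta β)^[n] u - ⌈β * (Tbeta β)^[n] u⌉ + 1 := by
      intro u; rw [Function.iterate_succ_apply']; rfl
    refine ⟨?_, ?_, ?_⟩
    · intro i hi
      rcases Nat.lt_succ_iff_lt_or_eq.mp hi with hi' | rfl
      · exact hd i hi'
      · unfold eps; rw [hcy]
    · rw [hiter x, hiter y, hcy]; nlinarith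
    · rw [hiter y, hiter z, hcy, hcx]; nlinarith



def lep (β : ℝ) (w : List ℤ) : ℝ :=
  ∑ j ∈ Finset.range w.length, (w.getD j 0 : ℝ) * (β ^ (j+1))⁻¹

lemma cyl_subset_Ioc (β : ℝ) (hβ : 0 < β) (w : List ℤ) :
    cyl β w ⊆ Ioc (lep β w) (lep β w + (β ^ w.length)⁻¹) := by
  intro x hx
  obtain ⟨hx01, hdig⟩ := hx
  have hexp := expand β hβ x w.length
  have hsum : (∑ j ∈ Finset.range w.length, (eps β x j : ℝ) * (β ^ (j+1))⁻¹) = lep β w := by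
    refine Finset.sum_congr rfl (fun j hj => ?_)
    rw [hdig j (Finset.mem_range.mp hj)]
  rw [hsum] at hexp
  have hT := iterate_mem β x hx01 w.length
  have hp : (0:ℝ) < (β ^ w.length)⁻¹ := by positivity
  constructor
  · rw [hexp]; nlinarith [hT.1]
  · rw [hexp]; nlinarith [hT.2]

lemma cyl_ordConnected (β : ℝ) (hβ : 0 < β) (w : List ℤ) {x y z : ℝ}
    (hx : x ∈ cyl β w) (hz : z ∈ cyl β w) (hxy : x ≤ y) (hyz : y ≤ z) : y ∈ cyl β w := by
  obtain ⟨hx01, hdx⟩ := hx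
  obtain ⟨hz01, hdz⟩ := hz
  have hsq := squeeze β hβ hxy hyz w.length (fun i hi => (hdx i hi).trans (hdz i hi).symm)
  exact ⟨⟨lt_of_lt_of_le hx01.1 hxy, le_trans hyz hz01.2⟩,
    fun j hj => (hsq.1 j hj).trans (hdx j hj)⟩

lemma Ioo_subset_cyl (β : ℝ) (hβ : 1 < β) (w : List ℤ)
    (hadm : (cyl β w).Nonempty) (hfull : len (cyl β w) = β ^ (-(w.length : ℤ))) :
    Ioo (lep β w) (lep β w + (β ^ w.length)⁻¹) ⊆ cyl β w := by
  have hβ0 : (0:ℝ) < β := lt_trans zero_lt_one hβ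
  set a := lep β w with ha
  set c := a + (β ^ w.length)⁻¹ with hc
  have hsub : cyl β w ⊆ Ioc a c := cyl_subset_Ioc β hβ0 w
  have hbddA : BddAbove (cyl β w) := ⟨c, fun x hx => (hsub hx).2⟩
  have hbddB : BddBelow (cyl β w) := ⟨a, fun x hx => le_of_lt (hsub hx).1⟩
  set i := sInf (cyl β w) with hi
  set s := sSup (cyl β w) with hs
  have hai : a ≤ i := le_csInf hadm (fun x hx => le_of_lt (hsub hx).1)
  have hsc : s ≤ c := csSup_le hadm (fun x hx => (hsub hx).2)
  have his : i ≤ s := csInf_le_csSup hadm hbddB hbddA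
  have hlen : len (cyl β w) ≤ s - i := by
    have h1 : cyl β w ⊆ Icc i s := fun x hx => ⟨csInf_le hbddB hx, le_csSup hbddA hx⟩
    have h2 : volume (cyl β w) ≤ volume (Icc i s) := measure_mono h1
    rw [Real.volume_Icc] at h2
    calc len (cyl β w) ≤ (ENNReal.ofReal (s - i)).toReal :=
          ENNReal.toReal_mono ENNReal.ofReal_ne_top h2
      _ ≤ s - i := by
          rw [ENNReal.toReal_ofReal (by linarith)]
  have hlenval : len (cyl β w) = (β ^ w.length)⁻¹ := by
    rw [hfull, zpow_neg, zpow_natCast]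
  have hca : c - a = (β ^ w.length)⁻¹ := by rw [hc]; ring
  clear_value i s a c
  have hia : i = a ∧ s = c := by constructor <;> linarith
  intro y hy
  obtain ⟨hy1, hy2⟩ := hy
  have h1 : i < y := by rw [hia.1]; exact hy1
  have h2 : y < s := by rw [hia.2]; exact hy2
  rw [hi] at h1
  rw [hs] at h2
  obtain ⟨p, hp, hpy⟩ := exists_lt_of_csInf_lt hadm h1
  obtain ⟨q, hq, hyq⟩ := exists_lt_of_lt_csSup hadm h2
  exact cyl_ordConnected β hβ0 w hp hq (le_of_lt hpy) (le_of_lt hyq)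


lemma zero_digits_iter (β : ℝ) (k m : ℕ) (h : ∀ j < m, eps β 1 (k + j) = 0) :
    (Tbeta β)^[k + m] 1 = β ^ m * (Tbeta β)^[k] 1 := by
  induction m with
  | zero => simp
  | succ m ih =>
    have hm := ih (fun j hj => h j (Nat.lt_succ_of_lt hj))
    have hceil : ⌈β * (Tbeta β)^[k + m] 1⌉ = 1 := by
      have := h m (Nat.lt_succ_self m); unfold eps at this; omega
    have h3 : (Tbeta β)^[k + (m+1)] 1 = Tbeta β ((Tbeta β)^[k+m] 1) := by
      rw [show k+(m+1) = (k+m)+1 from rfl, Function.iterate_succ_apply']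
    rw [h3, show Tbeta β ((Tbeta β)^[k+m] 1)
        = β * ((Tbeta β)^[k+m] 1) - ⌈β * ((Tbeta β)^[k+m] 1)⌉ + 1 from rfl, hceil, hm]
    push_cast
    ring

lemma tseq_bddAbove (β : ℝ) (hβ : 1 < β) (k : ℕ) :
    BddAbove {m : ℕ | ∀ j < m, eps β 1 (k + j) = 0} := by
  have h1 : (1:ℝ) ∈ Ioc (0:ℝ) 1 := ⟨zero_lt_one, le_refl 1⟩
  have hy : 0 < (Tbeta β)^[k] 1 := (iterate_mem β 1 h1 k).1
  obtain ⟨N, hN⟩ := pow_unbounded_of_one_lt (((Tbeta β)^[k] 1)⁻¹) hβ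
  refine ⟨N, fun m hm => ?_⟩
  by_contra hc
  push_neg at hc
  have hmem := zero_digits_iter β k m hm
  have hle : β ^ m * (Tbeta β)^[k] 1 ≤ 1 := by
    rw [← hmem]; exact (iterate_mem β 1 h1 (k+m)).2
  have hNm : β ^ N ≤ β ^ m := pow_le_pow_right₀ (le_of_lt hβ) (le_of_lt hc)
  have hinv : ((Tbeta β)^[k] 1)⁻¹ * (Tbeta β)^[k] 1 = 1 := inv_mul_cancel₀ hy.ne'
  nlinarith [hle, hNm, hN, hy, hinv]

lemma tseq_spec (β : ℝ) (hβ : 1 < β) (k : ℕ) :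
    (∀ j < tseq β k, eps β 1 (k + j) = 0) ∧ 1 ≤ eps β 1 (k + tseq β k) := by
  have hne : {m : ℕ | ∀ j < m, eps β 1 (k + j) = 0}.Nonempty :=
    ⟨0, fun j hj => absurd hj (Nat.not_lt_zero j)⟩
  have hbdd := tseq_bddAbove β hβ k
  have hmem : ∀ j < tseq β k, eps β 1 (k + j) = 0 := Nat.sSup_mem hne hbdd
  refine ⟨hmem, ?_⟩
  have hnz : eps β 1 (k + tseq β k) ≠ 0 := by
    intro h0
    have hmem2 : tseq β k + 1 ∈ {m : ℕ | ∀ j < m, eps β 1 (k + j) = 0} := by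
      intro j hj
      rcases Nat.lt_succ_iff_lt_or_eq.mp hj with hj' | rfl
      · exact hmem j hj'
      · exact h0
    have h4 : tseq β k + 1 ≤ tseq β k := le_csSup hbdd hmem2
    omega
  have hpos := eps_nonneg β 1 ⟨zero_lt_one, le_refl 1⟩ (lt_trans zero_lt_one hβ) (k + tseq β k)
  omega

lemma b_bounds (β : ℝ) (hβ : 1 < β) (k : ℕ) (hk : 1 ≤ k) :
    0 < ∑ j ∈ Finset.range k, (eps β 1 j : ℝ) * (β ^ (j+1))⁻¹ ∧
    (∑ j ∈ Finset.range k, (eps β 1 j : ℝ) * (β ^ (j+1))⁻¹)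
      + (β ^ (k + tseq β k + 1))⁻¹ < 1 := by
  have hβ0 : (0:ℝ) < β := lt_trans zero_lt_one hβ
  have h1 : (1:ℝ) ∈ Ioc (0:ℝ) 1 := ⟨zero_lt_one, le_refl 1⟩
  obtain ⟨hzero, hbig⟩ := tseq_spec β hβ k
  constructor
  · apply Finset.sum_pos'
    · intro j _
      have := eps_nonneg β 1 h1 hβ0 j
      positivity
    · refine ⟨0, Finset.mem_range.mpr hk, ?_⟩
      have hc : (2:ℤ) ≤ ⌈β * (Tbeta β)^[0] 1⌉ := by
        simp only [Function.iterate_zero_apply, mul_one]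
        exact Int.le_ceil_iff.mpr (by norm_num; linarith)
      have he : (1:ℤ) ≤ eps β 1 0 := by unfold eps; omega
      have : (1:ℝ) ≤ (eps β 1 0 : ℝ) := by exact_mod_cast he
      have hp : (0:ℝ) < (β ^ (0+1))⁻¹ := by positivity
      nlinarith
  · have hexp := expand β hβ0 1 (k + tseq β k)
    rw [Finset.sum_range_add] at hexp
    have hz : (∑ j ∈ Finset.range (tseq β k), (eps β 1 (k + j) : ℝ) * (β ^ (k + j + 1))⁻¹) = 0 := by
      refine Finset.sum_eq_zero (fun j hj => ?_)
      rw [hzero j (Finset.mem_range.mp hj)]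
      simp
    rw [hz] at hexp
    have hT : β⁻¹ < (Tbeta β)^[k + tseq β k] 1 := by
      have h2 : (2:ℤ) ≤ ⌈β * (Tbeta β)^[k + tseq β k] 1⌉ := by unfold eps at hbig; omega
      have h3 : (1:ℝ) < β * (Tbeta β)^[k + tseq β k] 1 := by
        by_contra hcon
        push_neg at hcon
        have := Int.ceil_le.mpr (by exact_mod_cast hcon : β * (Tbeta β)^[k+tseq β k] 1 ≤ ((1:ℤ):ℝ))
        omega
      rw [inv_lt_iff_one_lt_mul₀ hβ0]
      linarith [mul_comm β ((Tbeta β)^[k + tseq β k] 1)]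
    have hkt : (0:ℝ) < (β ^ (k + tseq β k))⁻¹ := by positivity
    have hsplit : (β ^ (k + tseq β k + 1))⁻¹ = (β ^ (k + tseq β k))⁻¹ * β⁻¹ := by
      rw [pow_succ, mul_inv]
    rw [hsplit]
    nlinarith [hexp]

/-- Let `k ≥ 1` and let `(ε_1,…,ε_n)` be an admissible word whose basic
interval is full. Then the closure of the basic interval
`I(ε_1,…,ε_n, ε*_1,…,ε*_k, 0^{t_k+1})` is contained in the interior of `I(ε_1,…,ε_n)`
taken in `[0,1]`. -/
theorem closure_subset_interior_full (β : ℝ) (hβ : 1 < β) (k : ℕ) (hk : 1 ≤ k)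
    (w : List ℤ) (hadm : Admissible β w) (hfull : IsFull β w) :
    closure (cyl β (w ++ estarWord β k ++ List.replicate (tseq β k + 1) 0))
      ⊆ intIn01 (cyl β w) := by
  have hβ0 : (0:ℝ) < β := lt_trans zero_lt_one hβ
  set n := w.length with hn
  set t := tseq β k with htdef
  set m := k + t + 1 with hm
  set W := w ++ estarWord β k ++ List.replicate (t + 1) 0 with hW
  set a := lep β w with ha
  set b := ∑ j ∈ Finset.range k, (eps β 1 j : ℝ) * (β ^ (j+1))⁻¹ with hb
  obtain ⟨hbpos, hblt⟩ := b_bounds β hβ k hk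
  rw [← hb] at hbpos
  have hblt' : b + (β ^ m)⁻¹ < 1 := by rw [hb, hm, htdef]; exact hblt
  -- lengths
  have hWlen : W.length = n + m := by
    simp [hW, hm, estarWord, List.length_append, List.length_map, List.length_range]
    omega
  -- digit values of W
  have hWlow : ∀ j < n, W.getD j 0 = w.getD j 0 := by
    intro j hj
    rw [hW, List.append_assoc, List.getD_append _ _ _ _ hj]
  have hWmidlen : (w ++ estarWord β k).length = n + k := by
    simp [hn, estarWord, List.length_append, List.length_map, List.length_range]
  have hWmid : ∀ j < k, W.getD (n + j) 0 = eps β 1 j := by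
    intro j hj
    rw [hW, List.getD_append _ _ _ _ (by rw [hWmidlen]; omega),
      List.getD_append_right _ _ _ _ (by omega : w.length ≤ n + j)]
    have : n + j - w.length = j := by rw [← hn]; omega
    rw [this, estarWord, List.getD_eq_getElem _ _ (by simp [hj])]
    simp
  have hWhigh : ∀ j, k ≤ j → j < m → W.getD (n + j) 0 = 0 := by
    intro j hjk hjm
    rw [hW, List.getD_append_right _ _ _ _ (by rw [hWmidlen]; omega)]
    rcases lt_or_ge (n + j - (w ++ estarWord β k).length) (t+1) with h | h
    · rw [List.getD_eq_getElem _ _ (by simpa using h)]; simp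
    · rw [List.getD_eq_default _ _ (by simpa using h)]
  -- step 1 : cyl β W ⊆ Icc lo hi
  set lo := a + (β ^ n)⁻¹ * b with hlo
  set hi := a + (β ^ n)⁻¹ * (b + (β ^ m)⁻¹) with hhi
  have hstep1 : cyl β W ⊆ Icc lo hi := by
    intro x hx
    obtain ⟨hx01, hdig⟩ := hx
    have hdig' : ∀ j < n + m, eps β x j = W.getD j 0 := by
      intro j hj; exact hdig j (by rw [hWlen]; exact hj)
    -- x = a + (β^n)⁻¹ * y
    have hexp := expand β hβ0 x n
    have hsuma : (∑ j ∈ Finset.range n, (eps β x j : ℝ) * (β ^ (j+1))⁻¹) = a := by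
      refine Finset.sum_congr rfl (fun j hj => ?_)
      have hj' := Finset.mem_range.mp hj
      rw [hdig' j (by omega), hWlow j hj']
    rw [hsuma] at hexp
    set y := (Tbeta β)^[n] x with hy
    have hy01 : y ∈ Ioc (0:ℝ) 1 := iterate_mem β x hx01 n
    -- digits of y
    have hydig : ∀ j < m, eps β y j = W.getD (n + j) 0 := by
      intro j hj
      rw [hy, ← eps_shift, hdig' (n+j) (by omega)]
    -- y = b + (β^m)⁻¹ * T^m y
    have hexpy := expand β hβ0 y m
    have hsumb : (∑ j ∈ Finset.range m, (eps β y j : ℝ) * (β ^ (j+1))⁻¹) = b := by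
      rw [hm, show k + t + 1 = k + (t+1) from rfl, Finset.sum_range_add]
      have h2 : (∑ j ∈ Finset.range (t+1), (eps β y (k + j) : ℝ) * (β ^ (k + j + 1))⁻¹) = 0 := by
        refine Finset.sum_eq_zero (fun j hj => ?_)
        rw [hydig (k+j) (by have := Finset.mem_range.mp hj; omega),
          hWhigh (k+j) (by omega) (by have := Finset.mem_range.mp hj; omega)]
        simp
      rw [h2, add_zero, hb]
      refine Finset.sum_congr rfl (fun j hj => ?_)
      rw [hydig j (by have := Finset.mem_range.mp hj; omega),
        hWmid j (Finset.mem_range.mp hj)]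
    rw [hsumb] at hexpy
    have hTm := iterate_mem β y hy01 m
    have hpn : (0:ℝ) < (β ^ n)⁻¹ := by positivity
    have hpm : (0:ℝ) < (β ^ m)⁻¹ := by positivity
    have hyb1 : b < y := by nlinarith [hTm.1, hpm, hexpy]
    have hyb2 : y ≤ b + (β ^ m)⁻¹ := by nlinarith [hTm.2, hpm, hexpy]
    constructor
    · rw [hlo, hexp]; nlinarith [mul_lt_mul_of_pos_left hyb1 hpn]
    · rw [hhi, hexp]; nlinarith [mul_le_mul_of_nonneg_left hyb2 hpn.le]
  -- step 2: closure ⊆ Icc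
  have hstep2 : closure (cyl β W) ⊆ Icc lo hi :=
    closure_minimal hstep1 isClosed_Icc
  -- step 3: Icc lo hi ⊆ Ioo a (a + (β^n)⁻¹)
  have hpn : (0:ℝ) < (β ^ n)⁻¹ := by positivity
  have hstep3 : Icc lo hi ⊆ Ioo a (a + (β ^ n)⁻¹) := by
    intro x hx
    obtain ⟨h1, h2⟩ := hx
    constructor
    · rw [hlo] at h1; nlinarith [mul_pos hpn hbpos]
    · rw [hhi] at h2; nlinarith [mul_lt_mul_of_pos_left hblt' hpn]
  -- step 4: Ioo ⊆ cyl β w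
  have hstep4 : Ioo a (a + (β ^ n)⁻¹) ⊆ cyl β w :=
    Ioo_subset_cyl β hβ w hadm hfull
  -- conclude
  intro x hx
  have hxIoo : x ∈ Ioo a (a + (β ^ n)⁻¹) := hstep3 (hstep2 hx)
  have hxcyl : x ∈ cyl β w := hstep4 hxIoo
  refine ⟨⟨le_of_lt hxcyl.1.1, hxcyl.1.2⟩, ?_⟩
  have hclosed : closure (Icc 0 1 \ cyl β w) ⊆ (Ioo a (a + (β ^ n)⁻¹))ᶜ := by
    apply closure_minimal _ (isOpen_Ioo.isClosed_compl)
    intro z hz hzIoo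
    exact hz.2 (hstep4 hzIoo)
  intro hcon
  exact hclosed hcon hxIoo
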